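/- Let (X,d) be a compact metric space, μ, ν probability measures on X. Suppose φ : X → ℝ is continuous and φ^c(y) := inf_x ( d(x,y)²/2 − φ(x) ). If a coupling Π of μ and ν is supported in the set ∂^c φ := { (x,y) : φ(x) + φ^c(y) = d(x,y)²/2 }, then Π is optimal for the quadratic cost, i.e. ∫ d(x,y)²/2 dΠ = (1/2)W₂²(μ,ν), and moreover (1/2)W₂²(μ,ν) = ∫ φ dμ + ∫ φ^c dν. -/
import Mathlib
open MeasureTheory

private lemma cont_integrable' {Y : Type*} [TopologicalSpace Y] [CompactSpace Y] [MeasurableSpace Y]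
    [OpensMeasurableSpace Y] (μ : Measure Y) [IsFiniteMeasure μ] {f : Y → ℝ}
    (hf : Continuous f) : Integrable f μ :=
  hf.integrable_of_hasCompactSupport (IsCompact.of_isClosed_subset isCompact_univ
    (isClosed_tsupport f) (Set.subset_univ _))

/-- (b) ⇒ (a) in the fundamental theorem of optimal transport: on a compact
metric space, if a coupling `P` of `μ` and `ν` is concentrated on the c-superdifferential
`∂^c φ = {(x,y) : φ x + φ^c y = dist x y²/2}` of a continuous function `φ`, then `P` is
optimal for the quadratic cost and the Kantorovich dual value is attained:
`(1/2) W₂²(μ,ν) = ∫ φ dμ + ∫ φ^c dν`. -/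
theorem fundamental_theorem_of_optimal_transport {X : Type*} [MetricSpace X]
    [CompactSpace X] [Nonempty X] [MeasurableSpace X] [BorelSpace X]
    (μ ν : Measure X) [IsProbabilityMeasure μ] [IsProbabilityMeasure ν]
    (φ : X → ℝ) (hφ : Continuous φ)
    (φc : X → ℝ)
    (hφc : ∀ y, φc y = sInf (Set.range fun x => dist x y ^ 2 / 2 - φ x))
    (P : Measure (X × X)) [IsProbabilityMeasure P]
    (hfst : P.map Prod.fst = μ) (hsnd : P.map Prod.snd = ν)
    (hsupp : P {p : X × X | φ p.1 + φc p.2 = dist p.1 p.2 ^ 2 / 2}ᶜ = 0) :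
    (∫ p, dist p.1 p.2 ^ 2 ∂P)
        = sInf ((fun P' : Measure (X × X) => ∫ p, dist p.1 p.2 ^ 2 ∂P') ''
            {P' | IsProbabilityMeasure P' ∧ P'.map Prod.fst = μ ∧ P'.map Prod.snd = ν}) ∧
    (sInf ((fun P' : Measure (X × X) => ∫ p, dist p.1 p.2 ^ 2 ∂P') ''
            {P' | IsProbabilityMeasure P' ∧ P'.map Prod.fst = μ ∧ P'.map Prod.snd = ν})) / 2
      = (∫ x, φ x ∂μ) + ∫ y, φc y ∂ν := by
  classical
  -- bound on φ
  obtain ⟨x₀, -, hx₀⟩ := isCompact_univ.exists_isMaxOn (Set.univ_nonempty)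
    ((continuous_abs.comp hφ).continuousOn)
  set M : ℝ := |φ x₀| with hM
  have hMb : ∀ x, |φ x| ≤ M := fun x => hx₀ (Set.mem_univ x)
  have hbdd : ∀ y, BddBelow (Set.range fun x => dist x y ^ 2 / 2 - φ x) := by
    intro y
    refine ⟨-M, ?_⟩
    rintro r ⟨x, rfl⟩
    have := abs_le.1 (hMb x)
    nlinarith [sq_nonneg (dist x y)]
  have hne : ∀ y, (Set.range fun x => dist x y ^ 2 / 2 - φ x).Nonempty :=
    fun y => Set.range_nonempty _
  -- key pointwise inequality
  have hkey : ∀ x y : X, φ x + φc y ≤ dist x y ^ 2 / 2 := by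
    intro x y
    have h := csInf_le (hbdd y) (Set.mem_range_self (f := fun x => dist x y ^ 2 / 2 - φ x) x)
    rw [← hφc y] at h
    linarith
  -- bound on distances
  obtain ⟨C₀, hC₀⟩ := Metric.isBounded_iff.1 (isCompact_univ (X := X)).isBounded
  set C : ℝ := max C₀ 0 with hCdef
  have hC0 : (0:ℝ) ≤ C := le_max_right _ _
  have hC : ∀ x y : X, dist x y ≤ C := fun x y => le_trans (hC₀ trivial trivial) (le_max_left _ _)
  -- Lipschitz-type bound for φc
  have hlip : ∀ y y' : X, φc y ≤ φc y' + 2 * C * dist y y' := by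
    intro y y'
    have h : φc y - 2 * C * dist y y' ≤ sInf (Set.range fun x => dist x y' ^ 2 / 2 - φ x) := by
      refine le_csInf (hne y') ?_
      rintro r ⟨x, rfl⟩
      have h1 : φc y ≤ dist x y ^ 2 / 2 - φ x := by
        rw [hφc]; exact csInf_le (hbdd y) (Set.mem_range_self x)
      have h2 : dist x y ≤ dist x y' + dist y y' := by
        rw [dist_comm y y']; exact dist_triangle _ _ _
      have h3 : dist x y ^ 2 / 2 ≤ dist x y' ^ 2 / 2 + 2 * C * dist y y' := by
        nlinarith [dist_nonneg (x := x) (y := y), dist_nonneg (x := x) (y := y'),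
          dist_nonneg (x := y) (y := y'), hC x y', hC y y']
      linarith
    rw [← hφc y'] at h
    linarith
  have hφcc : Continuous φc := by
    have : LipschitzWith (Real.toNNReal (2 * C)) φc := by
      refine LipschitzWith.of_dist_le_mul ?_
      intro y y'
      rw [Real.coe_toNNReal _ (by positivity), Real.dist_eq]
      rw [abs_sub_le_iff]
      constructor
      · have := hlip y y'; linarith
      · have := hlip y' y; rw [dist_comm y' y] at this; linarith
    exact this.continuous
  set D : ℝ := (∫ x, φ x ∂μ) + ∫ y, φc y ∂ν with hD
  -- integral identity for any coupling
  have hmarg : ∀ Q : Measure (X × X), IsProbabilityMeasure Q → Q.map Prod.fst = μ →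
      Q.map Prod.snd = ν → ∫ p, (φ p.1 + φc p.2) ∂Q = D := by
    intro Q hQ h1 h2
    haveI := hQ
    have i1 : Integrable (fun p : X × X => φ p.1) Q := cont_integrable' Q (hφ.comp continuous_fst)
    have i2 : Integrable (fun p : X × X => φc p.2) Q :=
      cont_integrable' Q (hφcc.comp continuous_snd)
    rw [integral_add i1 i2]
    have e1 : ∫ p, φ p.1 ∂Q = ∫ x, φ x ∂μ := by
      rw [← h1, integral_map measurable_fst.aemeasurable hφ.aestronglyMeasurable]
    have e2 : ∫ p, φc p.2 ∂Q = ∫ y, φc y ∂ν := by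
      rw [← h2, integral_map measurable_snd.aemeasurable hφcc.aestronglyMeasurable]
    rw [e1, e2]
  -- lower bound for any coupling
  have hlow : ∀ Q : Measure (X × X), IsProbabilityMeasure Q → Q.map Prod.fst = μ →
      Q.map Prod.snd = ν → 2 * D ≤ ∫ p, dist p.1 p.2 ^ 2 ∂Q := by
    intro Q hQ h1 h2
    haveI := hQ
    have i1 : Integrable (fun p : X × X => φ p.1 + φc p.2) Q :=
      cont_integrable' Q ((hφ.comp continuous_fst).add (hφcc.comp continuous_snd))
    have i2 : Integrable (fun p : X × X => dist p.1 p.2 ^ 2 / 2) Q :=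
      cont_integrable' Q ((continuous_dist.pow 2).div_const 2)
    have hmono := integral_mono i1 i2 (fun p => hkey p.1 p.2)
    rw [hmarg Q hQ h1 h2, integral_div] at hmono
    linarith
  -- equality for P
  have haeq : ∀ᵐ p ∂P, φ p.1 + φc p.2 = dist p.1 p.2 ^ 2 / 2 := by
    rw [ae_iff]
    have hset : {p : X × X | ¬ (φ p.1 + φc p.2 = dist p.1 p.2 ^ 2 / 2)}
        = {p : X × X | φ p.1 + φc p.2 = dist p.1 p.2 ^ 2 / 2}ᶜ := rfl
    rw [hset]; exact hsupp
  have hPeq : ∫ p, dist p.1 p.2 ^ 2 ∂P = 2 * D := by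
    have h1 : ∫ p, (φ p.1 + φc p.2) ∂P = ∫ p, dist p.1 p.2 ^ 2 / 2 ∂P :=
      integral_congr_ae haeq
    rw [hmarg P inferInstance hfst hsnd, integral_div] at h1
    linarith
  set I := (fun P' : Measure (X × X) => ∫ p, dist p.1 p.2 ^ 2 ∂P') ''
      {P' | IsProbabilityMeasure P' ∧ P'.map Prod.fst = μ ∧ P'.map Prod.snd = ν} with hI
  have hmem : (∫ p, dist p.1 p.2 ^ 2 ∂P) ∈ I := ⟨P, ⟨inferInstance, hfst, hsnd⟩, rfl⟩
  have hlb : ∀ r ∈ I, 2 * D ≤ r := by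
    rintro r ⟨Q, ⟨hQ1, hQ2, hQ3⟩, rfl⟩
    exact hlow Q hQ1 hQ2 hQ3
  have hsinf : sInf I = ∫ p, dist p.1 p.2 ^ 2 ∂P := by
    refine le_antisymm (csInf_le ⟨2 * D, fun r hr => hlb r hr⟩ hmem) ?_
    exact le_csInf ⟨_, hmem⟩ (fun r hr => hPeq ▸ hlb r hr)
  refine ⟨hsinf.symm, ?_⟩
  rw [hsinf, hPeq]
  ring
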